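/- arXiv:2605.07350 — 2 statements merged into one kernel-verified Lean document; each statement's English description precedes it below -/
import Mathlib

section
/- Let c > 0 and let v : ℝ → ℝ be continuously differentiable with v(x) > 0 for all x, and suppose there exists y ∈ ℝ with v(y) ≤ c. Then for every x ∈ ℝ, (max(v(x) − c, 0))² ≤ (∫_ℝ v(z)·1_{v(z)≥c} dz) · (∫_ℝ (v′(z))²/v(z) · 1_{v(z)≥c} dz), where 1_{v≥c} equals 1 where v ≥ c and 0 otherwise (and the inequality is trivially true if either integral is infinite). -/
open MeasureTheory

private theorem aux_CS (c : ℝ) (v : ℝ → ℝ)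
    (hv : ContDiff ℝ 1 v) (hpos : ∀ x, 0 < v x) (a b : ℝ) (hab : a ≤ b)
    (hge : ∀ᵐ z : ℝ, z ∈ Set.Ioc a b → c ≤ v z) :
    ENNReal.ofReal (|∫ z in a..b, deriv v z|) ^ 2
      ≤ (∫⁻ z : ℝ, ENNReal.ofReal (if c ≤ v z then v z else 0))
        * (∫⁻ z : ℝ, ENNReal.ofReal
            (if c ≤ v z then (deriv v z) ^ 2 / v z else 0)) := by
  have hD : Continuous (deriv v) := hv.continuous_deriv le_rfl
  have hsq : Continuous fun z => Real.sqrt (v z) :=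
    Real.continuous_sqrt.comp hv.continuous
  have hsqpos : ∀ z, 0 < Real.sqrt (v z) := fun z => Real.sqrt_pos.2 (hpos z)
  set f : ℝ → ENNReal := fun z => ENNReal.ofReal (Real.sqrt (v z)) with hf_def
  set g : ℝ → ENNReal := fun z => ENNReal.ofReal (|deriv v z| / Real.sqrt (v z))
    with hg_def
  have hfg : ∀ z : ℝ, ENNReal.ofReal |deriv v z| = (f * g) z := by
    intro z
    simp only [Pi.mul_apply, hf_def, hg_def]
    rw [← ENNReal.ofReal_mul (Real.sqrt_nonneg _)]
    congr 1
    rw [mul_comm, div_mul_cancel₀ _ (ne_of_gt (hsqpos z))]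
  have habs_int : IntegrableOn (fun z => |deriv v z|) (Set.Ioc a b) :=
    (intervalIntegrable_iff_integrableOn_Ioc_of_le hab).1
      (hD.abs.intervalIntegrable a b)
  have h1 : ENNReal.ofReal (|∫ z in a..b, deriv v z|)
      ≤ ∫⁻ z in Set.Ioc a b, (f * g) z := by
    calc ENNReal.ofReal (|∫ z in a..b, deriv v z|)
        ≤ ENNReal.ofReal (∫ z in a..b, |deriv v z|) :=
          ENNReal.ofReal_le_ofReal
            (intervalIntegral.abs_integral_le_integral_abs hab)
      _ = ENNReal.ofReal (∫ z in Set.Ioc a b, |deriv v z|) := by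
          rw [intervalIntegral.integral_of_le hab]
      _ = ∫⁻ z in Set.Ioc a b, ENNReal.ofReal |deriv v z| :=
          ofReal_integral_eq_lintegral_ofReal habs_int
            (Filter.Eventually.of_forall fun z => abs_nonneg _)
      _ = ∫⁻ z in Set.Ioc a b, (f * g) z := lintegral_congr hfg
  have hfm : AEMeasurable f (volume.restrict (Set.Ioc a b)) :=
    (ENNReal.measurable_ofReal.comp hsq.measurable).aemeasurable
  have hgm : AEMeasurable g (volume.restrict (Set.Ioc a b)) := by
    apply Measurable.aemeasurable
    exact ENNReal.measurable_ofReal.comp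
      ((hD.abs.div hsq fun z => ne_of_gt (hsqpos z)).measurable)
  have hCS := ENNReal.lintegral_mul_le_Lp_mul_Lq
    (volume.restrict (Set.Ioc a b))
    (show Real.HolderConjugate 2 2 from Real.HolderConjugate.two_two) hfm hgm
  -- identify the squared factors
  have hfpow : ∀ z : ℝ, f z ^ (2 : ℝ) = ENNReal.ofReal (v z) := by
    intro z
    rw [hf_def]
    rw [ENNReal.ofReal_rpow_of_nonneg (Real.sqrt_nonneg _) (by norm_num)]
    congr 1
    rw [show ((2 : ℝ)) = ((2 : ℕ) : ℝ) by norm_num, Real.rpow_natCast]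
    exact Real.sq_sqrt (le_of_lt (hpos z))
  have hgpow : ∀ z : ℝ, g z ^ (2 : ℝ) = ENNReal.ofReal ((deriv v z) ^ 2 / v z) := by
    intro z
    rw [hg_def]
    rw [ENNReal.ofReal_rpow_of_nonneg (by positivity) (by norm_num)]
    congr 1
    rw [show ((2 : ℝ)) = ((2 : ℕ) : ℝ) by norm_num, Real.rpow_natCast]
    rw [div_pow, sq_abs, Real.sq_sqrt (le_of_lt (hpos z))]
  have hmeas_if1 : Measurable fun z : ℝ =>
      ENNReal.ofReal (if c ≤ v z then v z else 0) := by
    apply ENNReal.measurable_ofReal.comp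
    exact Measurable.ite (measurableSet_le measurable_const hv.continuous.measurable)
      hv.continuous.measurable measurable_const
  have hmeas_if2 : Measurable fun z : ℝ =>
      ENNReal.ofReal (if c ≤ v z then (deriv v z) ^ 2 / v z else 0) := by
    apply ENNReal.measurable_ofReal.comp
    exact Measurable.ite (measurableSet_le measurable_const hv.continuous.measurable)
      ((hD.pow 2).div hv.continuous fun z => ne_of_gt (hpos z)).measurable
      measurable_const
  have hA : (∫⁻ z in Set.Ioc a b, f z ^ (2 : ℝ))
      ≤ ∫⁻ z : ℝ, ENNReal.ofReal (if c ≤ v z then v z else 0) := by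
    refine le_trans ?_ (setLIntegral_le_lintegral (Set.Ioc a b) _)
    refine setLIntegral_mono_ae' measurableSet_Ioc ?_
    filter_upwards [hge] with z hz hzin
    rw [hfpow z, if_pos (hz hzin)]
  have hB : (∫⁻ z in Set.Ioc a b, g z ^ (2 : ℝ))
      ≤ ∫⁻ z : ℝ, ENNReal.ofReal (if c ≤ v z then (deriv v z) ^ 2 / v z else 0) := by
    refine le_trans ?_ (setLIntegral_le_lintegral (Set.Ioc a b) _)
    refine setLIntegral_mono_ae' measurableSet_Ioc ?_
    filter_upwards [hge] with z hz hzin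
    rw [hgpow z, if_pos (hz hzin)]
  have key : ENNReal.ofReal (|∫ z in a..b, deriv v z|)
      ≤ ((∫⁻ z : ℝ, ENNReal.ofReal (if c ≤ v z then v z else 0)) ^ (1/2 : ℝ))
        * ((∫⁻ z : ℝ, ENNReal.ofReal
            (if c ≤ v z then (deriv v z) ^ 2 / v z else 0)) ^ (1/2 : ℝ)) := by
    refine le_trans (le_trans h1 hCS) ?_
    exact mul_le_mul' (ENNReal.rpow_le_rpow hA (by norm_num))
      (ENNReal.rpow_le_rpow hB (by norm_num))
  calc ENNReal.ofReal (|∫ z in a..b, deriv v z|) ^ 2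
      ≤ (((∫⁻ z : ℝ, ENNReal.ofReal (if c ≤ v z then v z else 0)) ^ (1/2 : ℝ))
        * ((∫⁻ z : ℝ, ENNReal.ofReal
            (if c ≤ v z then (deriv v z) ^ 2 / v z else 0)) ^ (1/2 : ℝ))) ^ 2 :=
        pow_le_pow_left' key 2
    _ = (∫⁻ z : ℝ, ENNReal.ofReal (if c ≤ v z then v z else 0))
          * (∫⁻ z : ℝ, ENNReal.ofReal
              (if c ≤ v z then (deriv v z) ^ 2 / v z else 0)) := by
        rw [mul_pow, ← ENNReal.rpow_natCast (_ ^ (1/2:ℝ)) 2,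
          ← ENNReal.rpow_natCast (_ ^ (1/2:ℝ)) 2,
          ← ENNReal.rpow_mul, ← ENNReal.rpow_mul]
        norm_num

/-- pointwise `L^∞` estimate from the fundamental theorem of
calculus and Cauchy–Schwarz: if `v` is `C¹`, positive, and `v(y) ≤ c` somewhere,
then `((v(x)−c)₊)² ≤ (∫ v 1_{v≥c}) (∫ (v′)²/v · 1_{v≥c})` for every `x`
(stated with lower integrals so that it is trivially true if either integral
is infinite). -/
theorem pointwise_Linfty_estimate (c : ℝ) (hc : 0 < c) (v : ℝ → ℝ)
    (hv : ContDiff ℝ 1 v) (hpos : ∀ x, 0 < v x) (hy : ∃ y : ℝ, v y ≤ c) :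
    ∀ x : ℝ,
      ENNReal.ofReal ((max (v x - c) 0) ^ 2)
        ≤ (∫⁻ z : ℝ, ENNReal.ofReal (if c ≤ v z then v z else 0))
          * (∫⁻ z : ℝ, ENNReal.ofReal
              (if c ≤ v z then (deriv v z) ^ 2 / v z else 0)) := by
  intro x
  by_cases hx : v x ≤ c
  · rw [max_eq_right (by linarith)]
    simp
  push_neg at hx
  obtain ⟨y, hyc⟩ := hy
  have hD : Continuous (deriv v) := hv.continuous_deriv le_rfl
  have hftc : ∀ p q : ℝ, ∫ z in p..q, deriv v z = v q - v p := fun p q =>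
    intervalIntegral.integral_deriv_eq_sub
      (fun z _ => (hv.differentiable one_ne_zero).differentiableAt)
      (hD.intervalIntegrable p q)
  have hSclosed : IsClosed {z : ℝ | v z ≤ c} :=
    isClosed_le hv.continuous continuous_const
  obtain ⟨a, b, hab, hle, hge⟩ : ∃ a b : ℝ, a ≤ b ∧
      v x - c ≤ |∫ z in a..b, deriv v z| ∧
      ∀ᵐ z : ℝ, z ∈ Set.Ioc a b → c ≤ v z := by
    rcases le_total y x with hyx | hxy
    · -- y ≤ x : take ξ = sSup of {v ≤ c} ∩ [y, x]
      set S : Set ℝ := {z : ℝ | v z ≤ c} ∩ Set.Icc y x with hS_def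
      have hScpt : IsCompact S := isCompact_Icc.inter_left hSclosed
      have hSne : S.Nonempty := ⟨y, hyc, Set.left_mem_Icc.2 hyx⟩
      set ξ : ℝ := sSup S with hξ_def
      have hξS : ξ ∈ S := hScpt.sSup_mem hSne
      have hvξ : v ξ ≤ c := hξS.1
      refine ⟨ξ, x, hξS.2.2, ?_, ?_⟩
      · rw [hftc]
        refine le_trans ?_ (le_abs_self _)
        linarith
      · refine Filter.Eventually.of_forall fun z hz => ?_
        by_contra h'
        push_neg at h'
        have hzS : z ∈ S := ⟨le_of_lt h', le_trans hξS.2.1 (le_of_lt hz.1), hz.2⟩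
        exact absurd (le_csSup hScpt.bddAbove hzS) (not_le.2 hz.1)
    · -- x ≤ y : take ξ = sInf of {v ≤ c} ∩ [x, y]
      set S : Set ℝ := {z : ℝ | v z ≤ c} ∩ Set.Icc x y with hS_def
      have hScpt : IsCompact S := isCompact_Icc.inter_left hSclosed
      have hSne : S.Nonempty := ⟨y, hyc, Set.right_mem_Icc.2 hxy⟩
      set ξ : ℝ := sInf S with hξ_def
      have hξS : ξ ∈ S := hScpt.sInf_mem hSne
      have hvξ : v ξ ≤ c := hξS.1
      refine ⟨x, ξ, hξS.2.1, ?_, ?_⟩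
      · rw [hftc]
        refine le_trans ?_ (neg_le_abs _)
        linarith
      · rw [MeasureTheory.ae_iff]
        refine measure_mono_null ?_ (measure_singleton ξ)
        intro z hz
        simp only [Set.mem_setOf_eq, Classical.not_imp, not_le] at hz
        obtain ⟨hzin, hzc⟩ := hz
        by_contra hne
        have hzlt : z < ξ := lt_of_le_of_ne hzin.2 hne
        have hzS : z ∈ S := ⟨le_of_lt hzc, le_of_lt hzin.1,
          le_trans (le_of_lt hzlt) hξS.2.2⟩
        exact absurd (csInf_le hScpt.bddBelow hzS) (not_le.2 hzlt)
  have h0 : (0 : ℝ) ≤ v x - c := by linarith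
  rw [max_eq_left h0, ENNReal.ofReal_pow h0]
  refine le_trans ?_ (aux_CS c v hv hpos a b hab hge)
  exact pow_le_pow_left' (ENNReal.ofReal_le_ofReal hle) 2
end

section
/- Let T > 0 and let θ : [0,T] × ℝ → ℝ be continuously differentiable. Define m(t) := inf_{x∈ℝ} θ(t,x) and suppose m(t) is finite for all t. Let t ∈ (0,T) be such that m is differentiable at t and the infimum is attained, i.e. there exists x_t ∈ ℝ with θ(t, x_t) = m(t). Then m′(t) = ∂_t θ(t, x_t). -/
open Set

/-- if `θ` is `C¹`, `m(t) = inf_x θ(t,x)` is finite, `m` is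
differentiable at `t ∈ (0,T)` and the infimum is attained at `x_t`, then
`m′(t) = ∂_t θ(t, x_t)`. -/
theorem deriv_of_inf_eq_partial_deriv (T : ℝ) (hT : 0 < T)
    (θ : ℝ → ℝ → ℝ) (hθ : ContDiff ℝ 1 (fun p : ℝ × ℝ => θ p.1 p.2))
    (m : ℝ → ℝ) (hm : ∀ t, m t = ⨅ x : ℝ, θ t x)
    (hbdd : ∀ t ∈ Icc (0 : ℝ) T, BddBelow (Set.range (θ t)))
    (t : ℝ) (ht : t ∈ Ioo (0 : ℝ) T)
    (hdiff : DifferentiableAt ℝ m t)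
    (x_t : ℝ) (hx : θ t x_t = m t) :
    deriv m t = deriv (fun s => θ s x_t) t := by
  have hθd : DifferentiableAt ℝ (fun s => θ s x_t) t := by
    have : (fun s => θ s x_t) = (fun p : ℝ × ℝ => θ p.1 p.2) ∘ (fun s => (s, x_t)) := rfl
    rw [this]
    exact (hθ.differentiable one_ne_zero).differentiableAt.comp t
      ((differentiableAt_id.prodMk (differentiableAt_const _)))
  set g : ℝ → ℝ := fun s => θ s x_t - m s with hg
  have hmin : IsLocalMin g t := by
    have hIcc : Icc (0 : ℝ) T ∈ nhds t :=
      Filter.mem_of_superset (isOpen_Ioo.mem_nhds ht) Ioo_subset_Icc_self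
    refine Filter.eventually_of_mem hIcc (fun s hs => ?_)
    have h1 : m s ≤ θ s x_t := by
      rw [hm s]; exact ciInf_le (hbdd s hs) x_t
    have h2 : g t = 0 := by simp [hg, hx]
    simp only [hg, h2]
    linarith
  have hgd : DifferentiableAt ℝ g t := hθd.sub hdiff
  have h0 : deriv g t = 0 := hmin.deriv_eq_zero
  have : deriv g t = deriv (fun s => θ s x_t) t - deriv m t := deriv_sub hθd hdiff
  linarith [this ▸ h0]
end
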